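/- arXiv:2112.00449 — 4 statements merged into one kernel-verified Lean document; each statement's English description precedes it below -/
import Mathlib

section
/- Let q be a query with k ≥ 2 distinct data items in a conflict-free broadcast schedule. Then acc(q) = k − 1 if and only if all k items of q are placed on a single channel in k consecutive slots, i.e., there exist a channel c and a slot m such that the positions of the items of q are exactly (c, m), (c, m+1), …, (c, m+k−1). -/
/-- The access time of a finite nonempty set `S` of data items under the slot
assignment `p`: maximum slot minus minimum slot over the items of `S`. -/
def accessTime {D : Type*} (p : D → ℕ) (S : Finset D) (h : S.Nonempty) : ℕ :=
  (S.image p).max' (h.image p) - (S.image p).min' (h.image p)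

/-- For a query `q` with `k ≥ 2` distinct data items in a conflict-free broadcast
schedule, `acc(q) = k - 1` iff all `k` items of `q` are placed on a single channel
in `k` consecutive slots `m, m+1, …, m+k-1`. -/
theorem accessTime_eq_card_sub_one_iff {D C : Type*} (L : ℕ) (q : Finset D)
    (hq : 2 ≤ q.card)
    (c : D → C) (p : D → ℕ)
    (hrange : ∀ d ∈ q, 1 ≤ p d ∧ p d ≤ L)
    (hone : ∀ d ∈ q, ∀ d' ∈ q, c d = c d' → p d = p d' → d = d')
    (hcf : ∀ d ∈ q, ∀ d' ∈ q, d ≠ d' → c d ≠ c d' → |(p d : ℤ) - (p d' : ℤ)| > 1) :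
    accessTime p q (Finset.card_pos.mp (by omega)) = q.card - 1 ↔
      ∃ (ch : C) (m : ℕ), (∀ d ∈ q, c d = ch) ∧
        q.image p = Finset.Icc m (m + q.card - 1) := by
  have hqne : q.Nonempty := Finset.card_pos.mp (by omega)
  have hPne : (q.image p).Nonempty := hqne.image p
  set P := q.image p with hP
  have hinj : ∀ d ∈ q, ∀ d' ∈ q, p d = p d' → d = d' := by
    intro d hd d' hd' hpp
    by_contra hne
    rcases eq_or_ne (c d) (c d') with hc | hc
    · exact hne (hone d hd d' hd' hc hpp)
    · have habs := hcf d hd d' hd' hne hc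
      rw [hpp] at habs; simp at habs
  have hcard : P.card = q.card :=
    Finset.card_image_of_injOn (fun a ha b hb hab => hinj a ha b hb hab)
  set M := P.max' hPne with hM
  set m0 := P.min' hPne with hm0
  have hsub : P ⊆ Finset.Icc m0 M := fun x hx =>
    Finset.mem_Icc.mpr ⟨P.min'_le x hx, P.le_max' x hx⟩
  have hmM : m0 ≤ M := P.min'_le M (P.max'_mem hPne)
  have hAT : accessTime p q (Finset.card_pos.mp (by omega)) = M - m0 := rfl
  rw [hAT]
  constructor
  · intro h
    have hMval : M = m0 + q.card - 1 := by omega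
    have hPeq : P = Finset.Icc m0 M := by
      apply Finset.eq_of_subset_of_card_le hsub
      rw [Nat.card_Icc]; omega
    obtain ⟨d0, hd0, hpd0⟩ : ∃ d ∈ q, p d = m0 := by
      have : m0 ∈ P := P.min'_mem hPne
      simpa [hP, Finset.mem_image] using this
    have key : ∀ j : ℕ, ∀ d ∈ q, p d = m0 + j → c d = c d0 := by
      intro j
      induction j with
      | zero =>
        intro d hd hpd
        have : d = d0 := hinj d hd d0 hd0 (by omega)
        rw [this]
      | succ j ih =>
        intro d hd hpd
        have hle : p d ≤ M := P.le_max' (p d) (Finset.mem_image_of_mem p hd)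
        have hmem : m0 + j ∈ P := by
          rw [hPeq]; exact Finset.mem_Icc.mpr ⟨by omega, by omega⟩
        obtain ⟨d', hd', hpd'⟩ := Finset.mem_image.mp hmem
        have hcd' := ih d' hd' hpd'
        rw [← hcd']
        by_contra hcc
        have hne : d ≠ d' := by intro e; subst e; omega
        have habs := hcf d hd d' hd' hne hcc
        have h1 : ((p d : ℤ) - (p d' : ℤ)) = 1 := by
          rw [hpd, hpd']; push_cast; ring
        rw [h1] at habs; norm_num at habs
    refine ⟨c d0, m0, ?_, ?_⟩
    · intro d hd
      have hge : m0 ≤ p d := P.min'_le (p d) (Finset.mem_image_of_mem p hd)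
      exact key (p d - m0) d hd (by omega)
    · rw [hPeq, hMval]
  · rintro ⟨ch, m, _, hPeq⟩
    have h1 : m ∈ P := by
      rw [hPeq]; exact Finset.mem_Icc.mpr ⟨le_refl m, by omega⟩
    have h2 : m + q.card - 1 ∈ P := by
      rw [hPeq]; exact Finset.mem_Icc.mpr ⟨by omega, le_refl _⟩
    have ha : m ≤ m0 ∧ m0 ≤ m + q.card - 1 :=
      Finset.mem_Icc.mp (by rw [← hPeq]; exact P.min'_mem hPne)
    have hb : m ≤ M ∧ M ≤ m + q.card - 1 :=
      Finset.mem_Icc.mp (by rw [← hPeq]; exact P.max'_mem hPne)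
    have hMv : M = m + q.card - 1 := le_antisymm hb.2 (P.le_max' _ h2)
    have hm0v : m0 = m := le_antisymm (P.min'_le m h1) ha.1
    omega
end

section
/- (Forward direction of the reduction from MMUOS to CDBMLρ, used in Theorem 1) Let there be m machines and n jobs, where job i consists of m unit operations o_i^1, …, o_i^m and operation o_i^j must run on machine j, and let t(i, j) ∈ ℕ be a unit-time open-shop schedule: for each fixed machine j the times t(1, j), …, t(n, j) are pairwise distinct, and for each fixed job i the times t(i, 1), …, t(i, m) are pairwise distinct. Define a broadcast schedule on m channels that places the data item corresponding to operation o_i^j on channel j at slot p(i, j) = 3·t(i, j). Then: (1) at most one data item occupies any (channel, slot) pair; (2) the schedule is conflict-free for every request q_i = {o_i^1, …, o_i^m}, i.e., for j ≠ j′, |p(i, j) − p(i, j′)| > 1; and (3) for every i, acc(q_i) = 3·C_i, where C_i = max_j t(i, j) − min_j t(i, j) is the flow time of job i. -/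
/-- The spread (max minus min) of a function `f : Fin m → ℕ`, for `m > 0`.
Used both for the flow time of a job (finish time minus release time) and for
the access time of a request (max slot minus min slot). -/
def spread {m : ℕ} (hm : 0 < m) (f : Fin m → ℕ) : ℕ :=
  (Finset.univ.image f).max' ((Finset.univ_nonempty_iff.mpr ⟨⟨0, hm⟩⟩).image f) -
  (Finset.univ.image f).min' ((Finset.univ_nonempty_iff.mpr ⟨⟨0, hm⟩⟩).image f)

lemma max'_scale {m : ℕ} (hm : 0 < m) (f : Fin m → ℕ) :
    (Finset.univ.image (fun j => 3 * f j)).max'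
      ((Finset.univ_nonempty_iff.mpr ⟨⟨0, hm⟩⟩).image _) =
    3 * (Finset.univ.image f).max' ((Finset.univ_nonempty_iff.mpr ⟨⟨0, hm⟩⟩).image f) := by
  apply le_antisymm
  · apply Finset.max'_le
    intro y hy
    simp only [Finset.mem_image, Finset.mem_univ, true_and] at hy
    obtain ⟨j, rfl⟩ := hy
    have : f j ≤ (Finset.univ.image f).max'
        ((Finset.univ_nonempty_iff.mpr ⟨⟨0, hm⟩⟩).image f) :=
      Finset.le_max' _ _ (Finset.mem_image_of_mem f (Finset.mem_univ j))
    omega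
  · obtain ⟨j, _, hj⟩ := Finset.mem_image.mp
      (Finset.max'_mem (Finset.univ.image f) ((Finset.univ_nonempty_iff.mpr ⟨⟨0, hm⟩⟩).image f))
    calc 3 * (Finset.univ.image f).max'
          ((Finset.univ_nonempty_iff.mpr ⟨⟨0, hm⟩⟩).image f) = 3 * f j := by rw [hj]
      _ ≤ _ := Finset.le_max' _ _
          (Finset.mem_image_of_mem (fun j => 3 * f j) (Finset.mem_univ j))

lemma min'_scale {m : ℕ} (hm : 0 < m) (f : Fin m → ℕ) :
    (Finset.univ.image (fun j => 3 * f j)).min'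
      ((Finset.univ_nonempty_iff.mpr ⟨⟨0, hm⟩⟩).image _) =
    3 * (Finset.univ.image f).min' ((Finset.univ_nonempty_iff.mpr ⟨⟨0, hm⟩⟩).image f) := by
  apply le_antisymm
  · obtain ⟨j, _, hj⟩ := Finset.mem_image.mp
      (Finset.min'_mem (Finset.univ.image f) ((Finset.univ_nonempty_iff.mpr ⟨⟨0, hm⟩⟩).image f))
    calc (Finset.univ.image (fun j => 3 * f j)).min'
          ((Finset.univ_nonempty_iff.mpr ⟨⟨0, hm⟩⟩).image _)
          ≤ 3 * f j := Finset.min'_le _ _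
            (Finset.mem_image_of_mem (fun j => 3 * f j) (Finset.mem_univ j))
      _ = _ := by rw [hj]
  · apply Finset.le_min'
    intro y hy
    simp only [Finset.mem_image, Finset.mem_univ, true_and] at hy
    obtain ⟨j, rfl⟩ := hy
    have : (Finset.univ.image f).min'
        ((Finset.univ_nonempty_iff.mpr ⟨⟨0, hm⟩⟩).image f) ≤ f j :=
      Finset.min'_le _ _ (Finset.mem_image_of_mem f (Finset.mem_univ j))
    omega

/-- (Forward direction of the reduction from MMUOS to CDBMLρ.) Given a
unit-time open-shop schedule `t` for `n` jobs on `m` machines (no machine runs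
two operations at the same time; no job has two operations at the same time),
the broadcast schedule placing the item of operation `o i j` on channel `j` at
slot `p i j = 3 * t i j` has at most one item per (channel, slot) pair, is
conflict-free for every request `q i = {o i 1, …, o i m}`, and satisfies
`acc(q i) = 3 * C i` where `C i` is the flow time of job `i`. -/
theorem mmuos_to_cdbml_forward {n m : ℕ} (hm : 0 < m)
    (t : Fin n → Fin m → ℕ)
    (hmach : ∀ j, ∀ i i' : Fin n, t i j = t i' j → i = i')
    (hjob : ∀ i : Fin n, ∀ j j' : Fin m, t i j = t i j' → j = j')
    (p : Fin n → Fin m → ℕ) (hp : ∀ i j, p i j = 3 * t i j) :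
    (∀ j, ∀ i i' : Fin n, p i j = p i' j → i = i') ∧
    (∀ i : Fin n, ∀ j j' : Fin m, j ≠ j' → |(p i j : ℤ) - (p i j' : ℤ)| > 1) ∧
    (∀ i : Fin n, spread hm (p i) = 3 * spread hm (t i)) := by
  refine ⟨?_, ?_, ?_⟩
  · intro j i i' h
    apply hmach j
    rw [hp, hp] at h
    omega
  · intro i j j' hjj
    have ht : t i j ≠ t i j' := fun h => hjj (hjob i j j' h)
    rw [hp, hp]
    push_cast
    have hne : (t i j : ℤ) - t i j' ≠ 0 := by
      intro h; apply ht; omega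
    have h1 : 1 ≤ |(t i j : ℤ) - t i j'| := Int.one_le_abs hne
    have h2 : |(3 * (t i j) : ℤ) - 3 * t i j'| = 3 * |(t i j : ℤ) - t i j'| := by
      rw [show (3 * (t i j) : ℤ) - 3 * t i j' = 3 * ((t i j : ℤ) - t i j') by ring,
        abs_mul]
      norm_num
    rw [h2]
    linarith
  · intro i
    have hpi : p i = fun j => 3 * t i j := funext fun j => hp i j
    unfold spread
    rw [hpi, max'_scale hm (t i), min'_scale hm (t i)]
    omega
end

section
/- (Backward direction of the reduction from MMUOS to CDBMLρ, used in Theorem 1) Let there be n requests q_1, …, q_n, each consisting of m distinct data items with the j-th item of request i placed on channel j at slot p(i, j), with at most one data item per (channel, slot) pair, and suppose the schedule is conflict-free for every request (for j ≠ j′, |p(i, j) − p(i, j′)| > 1). Then t(i, j) := p(i, j) is a valid unit-time open-shop schedule for n jobs on m machines: for each fixed machine j the times t(1, j), …, t(n, j) are pairwise distinct, for each fixed job i the times t(i, 1), …, t(i, m) are pairwise distinct, and the flow time C_i = max_j t(i, j) − min_j t(i, j) of job i equals the access time acc(q_i) of request i. -/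
/-- (Backward direction of the reduction from MMUOS to CDBMLρ.) Given a
conflict-free broadcast schedule for `n` requests of `m` items each, with the
`j`-th item of request `i` on channel `j` at slot `p i j` and at most one item
per (channel, slot) pair, setting `t i j := p i j` yields a valid unit-time
open-shop schedule: on each machine the job times are pairwise distinct, within
each job the operation times are pairwise distinct, and the flow time of each
job equals the access time of the corresponding request. -/
theorem cdbml_to_mmuos_backward {n m : ℕ} (hm : 0 < m)
    (p : Fin n → Fin m → ℕ)
    (hone : ∀ j, ∀ i i' : Fin n, p i j = p i' j → i = i')
    (hcf : ∀ i : Fin n, ∀ j j' : Fin m, j ≠ j' → |(p i j : ℤ) - (p i j' : ℤ)| > 1)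
    (t : Fin n → Fin m → ℕ) (ht : ∀ i j, t i j = p i j) :
    (∀ j, ∀ i i' : Fin n, t i j = t i' j → i = i') ∧
    (∀ i : Fin n, ∀ j j' : Fin m, t i j = t i j' → j = j') ∧
    (∀ i : Fin n, spread hm (t i) = spread hm (p i)) := by
  have hteq : t = p := funext fun i => funext fun j => ht i j
  subst hteq
  refine ⟨hone, ?_, fun i => rfl⟩
  intro i j j' h
  by_contra hne
  have := hcf i j j' hne
  rw [h] at this
  simp at this
end

section
/- (Average-latency transfer of the reduction in Theorem 1) Let there be m machines and n jobs as in the unit-time open shop, and suppose there exists a unit-time open-shop schedule t(i, j) (for each fixed machine the job times are pairwise distinct and for each fixed job the operation times are pairwise distinct) whose mean flow time satisfies (1/n)·Σ_{i=1}^{n} (max_j t(i, j) − min_j t(i, j)) ≤ T. Then there exists a conflict-free broadcast schedule on m channels for the n corresponding requests (each request q_i consisting of the m data items of job i, the j-th item on channel j) with at most one item per (channel, slot) pair, whose average access time satisfies (1/n)·Σ_{i=1}^{n} acc(q_i) ≤ 3T. -/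
lemma spread_mul_left {m : ℕ} (hm : 0 < m) (f : Fin m → ℕ) (c : ℕ) :
    spread hm (fun j => c * f j) = c * spread hm f := by
  unfold spread
  have himg : (Finset.univ.image fun j => c * f j) =
      (Finset.univ.image f).image (fun x => c * x) := by
    rw [Finset.image_image]; rfl
  have hne := (Finset.univ_nonempty_iff.mpr ⟨(⟨0, hm⟩ : Fin m)⟩).image f
  have hmono : Monotone (fun x : ℕ => c * x) := fun a b h => Nat.mul_le_mul_left c h
  have hmax : ((Finset.univ.image fun j => c * f j)).max'
        ((Finset.univ_nonempty_iff.mpr ⟨⟨0, hm⟩⟩).image _)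
      = c * (Finset.univ.image f).max' hne := by
    simp_rw [himg]
    exact Finset.max'_image hmono _ (hne.image _)
  have hmin : ((Finset.univ.image fun j => c * f j)).min'
        ((Finset.univ_nonempty_iff.mpr ⟨⟨0, hm⟩⟩).image _)
      = c * (Finset.univ.image f).min' hne := by
    simp_rw [himg]
    exact Finset.min'_image hmono _ (hne.image _)
  rw [hmax, hmin, ← Nat.mul_sub]

/-- (Average-latency transfer of the reduction in Theorem 1.) If there is a
unit-time open-shop schedule `t` for `n` jobs on `m` machines whose mean flow
time is at most `T`, then there is a conflict-free broadcast schedule on `m`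
channels for the `n` corresponding requests (the `j`-th item of request `i`
being placed on channel `j`), with at most one item per (channel, slot) pair,
whose average access time is at most `3 * T`. -/
theorem mmuos_to_cdbml_avg_latency {n m : ℕ} (hn : 0 < n) (hm : 0 < m) (T : ℝ)
    (t : Fin n → Fin m → ℕ)
    (hmach : ∀ j, ∀ i i' : Fin n, t i j = t i' j → i = i')
    (hjob : ∀ i : Fin n, ∀ j j' : Fin m, t i j = t i j' → j = j')
    (hmean : (1 / (n : ℝ)) * ∑ i : Fin n, (spread hm (t i) : ℝ) ≤ T) :
    ∃ p : Fin n → Fin m → ℕ,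
      (∀ j, ∀ i i' : Fin n, p i j = p i' j → i = i') ∧
      (∀ i : Fin n, ∀ j j' : Fin m, j ≠ j' → |(p i j : ℤ) - (p i j' : ℤ)| > 1) ∧
      (1 / (n : ℝ)) * ∑ i : Fin n, (spread hm (p i) : ℝ) ≤ 3 * T := by
  refine ⟨fun i j => 3 * t i j, ?_, ?_, ?_⟩
  · intro j i i' h
    dsimp only at h
    exact hmach j i i' (by omega)
  · intro i j j' hjj
    have ht : t i j ≠ t i j' := fun h => hjj (hjob i j j' h)
    have h0 : (t i j : ℤ) ≠ (t i j' : ℤ) := by exact_mod_cast ht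
    dsimp only
    push_cast
    rw [show (3 : ℤ) * t i j - 3 * t i j' = 3 * ((t i j : ℤ) - t i j') by ring, abs_mul,
      abs_of_nonneg (by norm_num : (0 : ℤ) ≤ 3)]
    have h1 : (1 : ℤ) ≤ |(t i j : ℤ) - t i j'| := Int.one_le_abs (sub_ne_zero.mpr h0)
    linarith
  · have hsum : ∑ i : Fin n, (spread hm (fun j => 3 * t i j) : ℝ)
        = 3 * ∑ i : Fin n, (spread hm (t i) : ℝ) := by
      rw [Finset.mul_sum]
      refine Finset.sum_congr rfl fun i _ => ?_
      rw [spread_mul_left hm (t i) 3]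
      push_cast
      ring
    calc (1 / (n : ℝ)) * ∑ i : Fin n, (spread hm (fun j => 3 * t i j) : ℝ)
        = 3 * ((1 / (n : ℝ)) * ∑ i : Fin n, (spread hm (t i) : ℝ)) := by
          rw [hsum]; ring
      _ ≤ 3 * T := by linarith
end
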